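/- Let a ≥ 1 and b, c ≥ 0 be integers and let d = gcd(a, |b − c|). The following modified Euclidean procedure terminates and produces the pair (d, ρ) where ρ ≡ b ≡ c (mod d) and 0 ≤ ρ ≤ d−1: starting from (a₀, b₀, c₀) = (a, b, c), at each step replace b_i, c_i by their residues b_{i+1}, c_{i+1} modulo a_i; if b_{i+1} = c_{i+1}, stop with output (a_i, b_{i+1}); otherwise replace a_i by a_{i+1} = the unique number in [1, |b_{i+1} − c_{i+1}|] + min(b_{i+1}, c_{i+1}) congruent to a_i modulo |b_{i+1} − c_{i+1}|, and repeat. At termination, a_N = gcd(a, |b−c|) and b_N = c_N ≡ b (mod gcd(a, |b−c|)). -/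

import Mathlib

/-- One step of the modified Euclidean procedure on a state `(a, b, c)`:
reduce `b` and `c` modulo `a`; if the residues agree, stop (fixed point);
otherwise replace `a` by the unique number in
`[min + 1, min + |b' − c'|]` congruent to `a` modulo `|b' − c'|`,
where `b', c'` are the residues and `min = min b' c'`. -/
def euclidStep : ℕ × ℕ × ℕ → ℕ × ℕ × ℕ := fun s =>
  let a := s.1
  let b := s.2.1 % a
  let c := s.2.2 % a
  if b = c then (a, b, c)
  else (min b c + ((a - min b c - 1) % (max b c - min b c) + 1), b, c)

lemma gcdCongr {n x y : ℤ} (h : n ∣ x - y) : Int.gcd n x = Int.gcd n y := by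
  apply Nat.dvd_antisymm
  · rw [← Int.natCast_dvd_natCast]
    refine Int.dvd_coe_gcd (Int.gcd_dvd_left _ _) ?_
    have : (Int.gcd n x : ℤ) ∣ x - (x - y) := dvd_sub (Int.gcd_dvd_right _ _) ((Int.gcd_dvd_left _ _).trans h)
    simpa using this
  · rw [← Int.natCast_dvd_natCast]
    refine Int.dvd_coe_gcd (Int.gcd_dvd_left _ _) ?_
    have : (Int.gcd n y : ℤ) ∣ y + (x - y) := dvd_add (Int.gcd_dvd_right _ _) ((Int.gcd_dvd_left _ _).trans h)
    simpa using this

lemma gcdD (a b c : ℕ) : Nat.gcd a (max b c - min b c) = Int.gcd (a : ℤ) ((b : ℤ) - c) := by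
  have h1 : ((b:ℤ) - c).natAbs = max b c - min b c := by omega
  have h2 : Int.gcd (a : ℤ) ((b:ℤ) - c) = Nat.gcd a ((b:ℤ) - c).natAbs := by simp [Int.gcd]
  rw [h2, h1]

lemma gcdMod (a b c : ℕ) : Nat.gcd a (max (b % a) (c % a) - min (b % a) (c % a))
    = Nat.gcd a (max b c - min b c) := by
  rw [gcdD, gcdD]
  apply gcdCongr
  have hb : (a : ℤ) ∣ (b : ℤ) - (b % a : ℕ) := by
    have h0 := Int.natCast_dvd_natCast.mpr (Nat.dvd_sub_mod (n := a) b)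
    have hle : b % a ≤ b := Nat.mod_le _ _
    rwa [Nat.cast_sub hle] at h0
  have hc : (a : ℤ) ∣ (c : ℤ) - (c % a : ℕ) := by
    have h0 := Int.natCast_dvd_natCast.mpr (Nat.dvd_sub_mod (n := a) c)
    have hle : c % a ≤ c := Nat.mod_le _ _
    rwa [Nat.cast_sub hle] at h0
  have : ((b % a : ℕ) : ℤ) - (c % a : ℕ) - ((b:ℤ) - c) = -(((b:ℤ) - (b % a : ℕ)) - ((c:ℤ) - (c % a : ℕ))) := by ring
  rw [this]
  exact dvd_neg.mpr (dvd_sub hb hc)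

lemma euclid_aux : ∀ a : ℕ, ∀ b c : ℕ, 1 ≤ a →
    ∃ (N : ℕ) (a' b' c' : ℕ), (euclidStep^[N]) (a, b, c) = (a', b', c') ∧
      b' = c' ∧
      a' = Nat.gcd a (max b c - min b c) ∧
      b' = b % a' ∧ c' = c % a' ∧ b' ≤ a' - 1 := by
  intro a
  induction a using Nat.strong_induction_on with
  | _ a ih =>
  intro b c ha
  by_cases h : b % a = c % a
  · refine ⟨1, a, b % a, c % a, ?_, h, ?_, rfl, rfl, ?_⟩
    · simp [euclidStep, h]
    · have hdvd : a ∣ max b c - min b c := by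
        rcases le_total b c with hbc | hbc
        · have := (Nat.modEq_iff_dvd' hbc).mp h
          simpa [max_eq_right hbc, min_eq_left hbc] using this
        · have := (Nat.modEq_iff_dvd' hbc).mp h.symm
          simpa [max_eq_left hbc, min_eq_right hbc] using this
      exact (Nat.gcd_eq_left hdvd).symm
    · have := Nat.mod_lt b (show 0 < a by omega)
      omega
  · set m := min (b % a) (c % a) with hm
    set M := max (b % a) (c % a) with hM
    have hMa : M < a := by
      have h1 := Nat.mod_lt b (show 0 < a by omega)
      have h2 := Nat.mod_lt c (show 0 < a by omega)
      simp only [hM]; omega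
    have hmM : m < M := by simp only [hm, hM]; omega
    have hdpos : 0 < M - m := by omega
    set a₁ := m + ((a - m - 1) % (M - m) + 1) with ha₁
    have hmodlt : (a - m - 1) % (M - m) < M - m := Nat.mod_lt _ hdpos
    have ha₁a : a₁ < a := by omega
    have ha₁pos : 1 ≤ a₁ := by omega
    -- a₁ ≡ a [MOD M - m]
    have hmodeq : a₁ ≡ a [MOD M - m] := by
      have h1 : a₁ = (m + 1) + (a - m - 1) % (M - m) := by omega
      have h2 : a = (m + 1) + (a - m - 1) := by omega
      rw [h1]; conv_rhs => rw [h2]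
      exact Nat.ModEq.add_left _ (Nat.mod_modEq _ _)
    have hgcd1 : Nat.gcd a₁ (M - m) = Nat.gcd a (M - m) := by
      rw [Nat.gcd_comm, Nat.gcd_rec, hmodeq, ← Nat.gcd_rec, Nat.gcd_comm]
    obtain ⟨N, a', b', c', hit, hbc, hg, hb, hc, hle⟩ := ih a₁ ha₁a (b % a) (c % a) ha₁pos
    have hga : a' = Nat.gcd a (max b c - min b c) := by
      rw [hg, ← hM, ← hm, hgcd1, ← gcdMod a b c, ← hM, ← hm]
    have hdvda : a' ∣ a := hga ▸ Nat.gcd_dvd_left _ _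
    refine ⟨N + 1, a', b', c', ?_, hbc, hga, ?_, ?_, hle⟩
    · rw [Function.iterate_succ_apply]
      have hstep : euclidStep (a, b, c) = (a₁, b % a, c % a) := by
        simp only [euclidStep, if_neg h]; rfl
      rw [hstep, hit]
    · rw [hb, Nat.mod_mod_of_dvd b hdvda]
    · rw [hc, Nat.mod_mod_of_dvd c hdvda]

theorem euclid_procedure_terminates (a b c : ℕ) (ha : 1 ≤ a) :
    ∃ (N : ℕ) (a' b' c' : ℕ), (euclidStep^[N]) (a, b, c) = (a', b', c') ∧
      b' = c' ∧
      a' = Nat.gcd a (max b c - min b c) ∧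
      b' = b % a' ∧ c' = c % a' ∧ b' ≤ a' - 1 :=
  euclid_aux a b c ha
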